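/- Let k ≥ 2, n = 4k, and let H ≤ Sym_n be the regular Cayley representation of Q_{4k}. Let i, j, l, m be integers with 1 ≤ j ≤ l < m ≤ n, 1 ≤ i ≤ 2 and n − 1 ≤ m. Let σ, τ, λ ∈ H with σ ≠ τ. Suppose that the sequence (σ(j), σ(j+1), ..., σ(l), τ(l+1), ..., τ(m)) equals the sequence (λ(i), λ(i+1), ..., λ(m − j + i)). Then j = l and l + 1 = m. -/

import Mathlib

/-- The position in `{1, ..., 4*k}` of an element of the generalized quaternion group
`Q_{4k}`, under the identification `t^i ↔ i+1` and `t^i * u ↔ i + 2k + 1`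
(for `0 ≤ i ≤ 2k-1`), where `t = QuaternionGroup.a 1` and `u = QuaternionGroup.xa 0`.
Note `QuaternionGroup.xa j = u * t^j = t^(-j) * u`. -/
def qpos (k : ℕ) : QuaternionGroup k → ℕ
  | .a i => i.val + 1
  | .xa i => (-i).val + 2 * k + 1

/-- The element of `Q_{4k}` at position `p ∈ {1, ..., 4*k}`. -/
def qofpos (k : ℕ) (p : ℕ) : QuaternionGroup k :=
  if p ≤ 2 * k then .a ((p - 1 : ℕ) : ZMod (2 * k))
  else .xa (-((p - 2 * k - 1 : ℕ) : ZMod (2 * k)))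

/-- The Cayley (left regular) representation of `Q_{4k}` as permutations of the
positions `{1, ..., 4*k}`: the element at position `p` is sent, by `g`, to the
position of `g * (element at position p)`. -/
def qact (k : ℕ) (g : QuaternionGroup k) (p : ℕ) : ℕ :=
  qpos k (g * qofpos k p)

lemma qpos_bounds (k : ℕ) (hk : 2 ≤ k) (x : QuaternionGroup k) :
    1 ≤ qpos k x ∧ qpos k x ≤ 4 * k := by
  haveI : NeZero (2 * k) := ⟨by omega⟩
  cases x with
  | a i => have := i.val_lt; simp only [qpos]; omega
  | xa i => have := (-i).val_lt; simp only [qpos]; omega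

/-- The generator `x_{σ(p)}` (as an element of `Fin (4*k)`, `0`-indexed) of the free
monoid, where `σ` is the permutation of `{1, ..., 4*k}` given by `g ∈ H`. -/
def qletter (k : ℕ) (hk : 2 ≤ k) (g : QuaternionGroup k) (p : ℕ) : Fin (4 * k) :=
  ⟨qact k g p - 1, by
    have h := qpos_bounds k hk (g * qofpos k p)
    simp only [qact]; omega⟩

/-- The word `x_{σ(a)} x_{σ(a+1)} ⋯ x_{σ(a+len-1)}` in the free monoid on
`x_1, ..., x_n` (letters indexed by `Fin (4*k)`, `0`-indexed). -/
def segWord (k : ℕ) (hk : 2 ≤ k) (g : QuaternionGroup k) (a len : ℕ) :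
    FreeMonoid (Fin (4 * k)) :=
  FreeMonoid.ofList ((List.range' a len).map (qletter k hk g))

/-- The word `x_1 x_2 ⋯ x_n`. -/
def baseWord (k : ℕ) : FreeMonoid (Fin (4 * k)) :=
  FreeMonoid.ofList (List.ofFn (fun m : Fin (4 * k) => m))

/-- The defining relations `x_1 ⋯ x_n = x_{σ(1)} ⋯ x_{σ(n)}`, `σ ∈ H`. -/
def qrel (k : ℕ) (hk : 2 ≤ k) (w v : FreeMonoid (Fin (4 * k))) : Prop :=
  w = baseWord k ∧ ∃ g : QuaternionGroup k, v = segWord k hk g 1 (4 * k)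

/-- The congruence on the free monoid generated by the defining relations. -/
def qcon (k : ℕ) (hk : 2 ≤ k) : Con (FreeMonoid (Fin (4 * k))) :=
  conGen (qrel k hk)

/-- The monoid `S_n(H) = ⟨a_1, ..., a_n ∣ a_1 ⋯ a_n = a_{σ(1)} ⋯ a_{σ(n)}, σ ∈ H⟩`
where `n = 4k` and `H` is the regular Cayley representation of `Q_{4k}` in `Sym_n`. -/
abbrev Smon (k : ℕ) (hk : 2 ≤ k) : Type := (qcon k hk).Quotient

section Aux

open QuaternionGroup

lemma neg_one_ne_one' (k : ℕ) (hk : 2 ≤ k) : (-1 : ZMod (2*k)) ≠ 1 := by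
  haveI : NeZero (2*k) := ⟨by omega⟩
  intro h
  have h2 : ((2 : ℕ) : ZMod (2*k)) = 0 := by push_cast; linear_combination -h
  rw [ZMod.natCast_eq_zero_iff] at h2
  have := Nat.le_of_dvd (by norm_num) h2
  omega

lemma qpos_inj (k : ℕ) (hk : 2 ≤ k) : Function.Injective (qpos k) := by
  haveI : NeZero (2*k) := ⟨by omega⟩
  rintro (i | i) (j | j) h <;> simp only [qpos] at h
  · exact congrArg _ (ZMod.val_injective _ (by omega))
  · have := i.val_lt; have := (-j).val_lt; omega
  · have := j.val_lt; have := (-i).val_lt; omega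
  · have : -i = -j := ZMod.val_injective _ (by omega)
    exact congrArg _ (neg_injective this)

/-- `c q = (e (q+1))⁻¹ * e q` where `e = qofpos k`. -/
def celt (k : ℕ) (q : ℕ) : QuaternionGroup k :=
  (qofpos k (q+1))⁻¹ * qofpos k q

lemma celt_eq (k : ℕ) (hk : 2 ≤ k) (q : ℕ) (hq1 : 1 ≤ q) (_hq2 : q ≤ 4*k) :
    celt k q = if q ≤ 2*k - 1 then a (-1 : ZMod (2*k))
      else if q = 2*k then xa ((k : ZMod (2*k)) + (2*k-1 : ℕ))
      else a (1 : ZMod (2*k)) := by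
  rcases lt_trichotomy q (2*k) with hq | hq | hq
  · rw [if_pos (by omega)]
    unfold celt qofpos
    rw [if_pos (by omega), if_pos (by omega)]
    show (a _)⁻¹ * a _ = _
    have h1 : (a ((q+1-1 : ℕ) : ZMod (2*k)))⁻¹ = a (-((q+1-1 : ℕ) : ZMod (2*k))) := rfl
    rw [h1, a_mul_a]
    congr 1
    have h2 : ((q - 1 : ℕ) : ZMod (2*k)) = (q : ZMod (2*k)) - 1 := by
      rw [show q = q - 1 + 1 by omega]
      push_cast [show q - 1 + 1 - 1 = q - 1 from rfl]
      ring
    rw [h2]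
    push_cast
    ring
  · rw [if_neg (by omega), if_pos hq]
    unfold celt qofpos
    rw [if_neg (by omega), if_pos (by omega)]
    have h0 : ((q + 1 - 2*k - 1 : ℕ) : ZMod (2*k)) = 0 := by
      rw [show q + 1 - 2*k - 1 = 0 by omega]; simp
    rw [h0, neg_zero]
    show (xa 0)⁻¹ * a _ = _
    have h1 : (xa (0 : ZMod (2*k)))⁻¹ = xa ((k : ZMod (2*k)) + 0) := rfl
    rw [h1, add_zero, xa_mul_a, show q = 2*k from hq]
  · rw [if_neg (by omega), if_neg (by omega)]
    unfold celt qofpos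
    rw [if_neg (by omega), if_neg (by omega)]
    show (xa _)⁻¹ * xa _ = _
    have h1 : (xa (-((q+1-2*k-1 : ℕ) : ZMod (2*k))))⁻¹ =
        xa ((k : ZMod (2*k)) + -((q+1-2*k-1 : ℕ) : ZMod (2*k))) := rfl
    rw [h1, xa_mul_xa]
    congr 1
    have e1 : ((q + 1 - 2*k - 1 : ℕ) : ZMod (2*k)) = ((q - 2*k - 1 : ℕ) : ZMod (2*k)) + 1 := by
      rw [show q + 1 - 2*k - 1 = (q - 2*k - 1) + 1 by omega]; push_cast; ring
    rw [e1]
    ring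

lemma celt_eq_iff (k : ℕ) (hk : 2 ≤ k) (p q : ℕ) (hp1 : 1 ≤ p) (hp2 : p ≤ 4*k)
    (hq1 : 1 ≤ q) (hq2 : q ≤ 4*k) :
    celt k q = celt k p ↔ ((q ≤ 2*k-1 ↔ p ≤ 2*k-1) ∧ (q = 2*k ↔ p = 2*k)) := by
  rw [celt_eq k hk p hp1 hp2, celt_eq k hk q hq1 hq2]
  have hne := neg_one_ne_one' k hk
  split_ifs <;>
    first
      | exact iff_of_true rfl (by omega)
      | exact iff_of_false id (by omega)
      | exact iff_of_false (fun hh => QuaternionGroup.noConfusion hh) (by omega)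
      | exact iff_of_false (fun hh => hne (QuaternionGroup.a.inj hh)) (by omega)
      | exact iff_of_false (fun hh => hne
          (QuaternionGroup.a.inj hh).symm) (by omega)

lemma group_aux {G : Type*} [Group G] {f A B C D : G} :
    f * (B * D⁻¹) = f * (A * C⁻¹) ↔ A⁻¹ * B = C⁻¹ * D := by
  constructor
  · intro hh
    have h2 : B * D⁻¹ = A * C⁻¹ := mul_left_cancel hh
    calc A⁻¹ * B = A⁻¹ * (B * D⁻¹) * D := by group
    _ = A⁻¹ * (A * C⁻¹) * D := by rw [h2]
    _ = C⁻¹ * D := by group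
  · intro hh
    have h2 : B * D⁻¹ = A * C⁻¹ := by
      calc B * D⁻¹ = A * (A⁻¹ * B) * D⁻¹ := by group
      _ = A * (C⁻¹ * D) * D⁻¹ := by rw [hh]
      _ = A * C⁻¹ := by group
    rw [h2]

end Aux
/-- if `1 ≤ j ≤ l < m ≤ n`, `1 ≤ i ≤ 2`, `n - 1 ≤ m`, `σ ≠ τ`, and the
sequence `(σ(j), ..., σ(l), τ(l+1), ..., τ(m))` coincides with
`(λ(i), λ(i+1), ..., λ(m-j+i))`, then `j = l` and `l + 1 = m`. -/
theorem stmt6 (k : ℕ) (hk : 2 ≤ k) (g h f : QuaternionGroup k) (i j l m : ℕ)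
    (hj : 1 ≤ j) (hjl : j ≤ l) (hlm : l < m) (hm : m ≤ 4 * k)
    (hi1 : 1 ≤ i) (hi2 : i ≤ 2) (hm2 : 4 * k - 1 ≤ m)
    (hne : qact k g ≠ qact k h)
    (heq1 : ∀ p, j ≤ p → p ≤ l → qact k g p = qact k f (p - j + i))
    (heq2 : ∀ p, l + 1 ≤ p → p ≤ m → qact k h p = qact k f (p - j + i)) :
    j = l ∧ l + 1 = m := by
  have key : ∀ (x y : QuaternionGroup k) (p q : ℕ),
      qact k x p = qact k y q → x * qofpos k p = y * qofpos k q := by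
    intro x y p q hpq
    exact qpos_inj k hk hpq
  have hg : ∀ p, j ≤ p → p ≤ l → g = f * (qofpos k (p-j+i) * (qofpos k p)⁻¹) := by
    intro p h1 h2
    have := key g f p (p-j+i) (heq1 p h1 h2)
    rw [← mul_assoc, eq_mul_inv_iff_mul_eq]; exact this
  have hh : ∀ p, l+1 ≤ p → p ≤ m → h = f * (qofpos k (p-j+i) * (qofpos k p)⁻¹) := by
    intro p h1 h2
    have := key h f p (p-j+i) (heq2 p h1 h2)
    rw [← mul_assoc, eq_mul_inv_iff_mul_eq]; exact this
  have hgh : g ≠ h := fun e => hne (by rw [e])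
  have hbd : celt k (l-j+i) ≠ celt k l := by
    intro hc
    apply hgh
    rw [hg l hjl le_rfl, hh (l+1) le_rfl hlm]
    rw [show l+1-j+i = (l-j+i)+1 by omega]
    simp only [celt] at hc
    exact group_aux.2 hc
  have hA : ∀ p, j ≤ p → p+1 ≤ l → celt k (p-j+i) = celt k p := by
    intro p h1 h2
    have e1 := hg p h1 (by omega)
    have e2 := hg (p+1) (by omega) h2
    rw [show p+1-j+i = (p-j+i)+1 by omega] at e2
    simp only [celt]
    exact group_aux.1 (e1.symm.trans e2)
  have hB : ∀ p, l+1 ≤ p → p+1 ≤ m → celt k (p-j+i) = celt k p := by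
    intro p h1 h2
    have e1 := hh p h1 (by omega)
    have e2 := hh (p+1) (by omega) h2
    rw [show p+1-j+i = (p-j+i)+1 by omega] at e2
    simp only [celt]
    exact group_aux.1 (e1.symm.trans e2)
  have Hbd : ¬ ((l-j+i ≤ 2*k-1 ↔ l ≤ 2*k-1) ∧ (l-j+i = 2*k ↔ l = 2*k)) := fun hr =>
    hbd ((celt_eq_iff k hk l (l-j+i) (by omega) (by omega) (by omega) (by omega)).2 hr)
  have HA : ∀ p, j ≤ p → p+1 ≤ l →
      ((p-j+i ≤ 2*k-1 ↔ p ≤ 2*k-1) ∧ (p-j+i = 2*k ↔ p = 2*k)) := fun p h1 h2 =>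
    (celt_eq_iff k hk p (p-j+i) (by omega) (by omega) (by omega) (by omega)).1 (hA p h1 h2)
  have HB : ∀ p, l+1 ≤ p → p+1 ≤ m →
      ((p-j+i ≤ 2*k-1 ↔ p ≤ 2*k-1) ∧ (p-j+i = 2*k ↔ p = 2*k)) := fun p h1 h2 =>
    (celt_eq_iff k hk p (p-j+i) (by omega) (by omega) (by omega) (by omega)).1 (hB p h1 h2)
  have H1 : j+1 ≤ l → ((l-1-j+i ≤ 2*k-1 ↔ l-1 ≤ 2*k-1) ∧ (l-1-j+i = 2*k ↔ l-1 = 2*k)) :=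
    fun hc => HA (l-1) (by omega) (by omega)
  have H2 : j ≤ 2*k-1 → 2*k ≤ l →
      ((2*k-1-j+i ≤ 2*k-1 ↔ 2*k-1 ≤ 2*k-1) ∧ (2*k-1-j+i = 2*k ↔ 2*k-1 = 2*k)) :=
    fun hc1 hc2 => HA (2*k-1) (by omega) (by omega)
  have H3 : l+1 ≤ 2*k → ((2*k-j+i ≤ 2*k-1 ↔ 2*k ≤ 2*k-1) ∧ (2*k-j+i = 2*k ↔ 2*k = 2*k)) :=
    fun hc => HB (2*k) (by omega) (by omega)
  have H4 : l+2 ≤ m → ((l+1-j+i ≤ 2*k-1 ↔ l+1 ≤ 2*k-1) ∧ (l+1-j+i = 2*k ↔ l+1 = 2*k)) :=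
    fun hc => HB (l+1) (by omega) (by omega)
  omega
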